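/- Under the abstract axioms (A1)–(A5), let u ∈ X and w ∈ ω(u). Then for every w¹, w² in the closure of the orbit γ(w) with w¹ ≠ w², the pair (w¹, w²) does not lie in the singular set Σ. -/

import Mathlib

open Filter Topology Set

private lemma flowPair_cont {X : Type*} [TopologicalSpace X]
    (φ : ℝ → X → X) (hφc : Continuous fun p : ℝ × X => φ p.1 p.2) (x y : X) :
    Continuous fun σ : ℝ => (φ σ x, φ σ y) := by
  have h1 : Continuous fun σ : ℝ => φ σ x :=
    hφc.comp (continuous_id.prodMk continuous_const)
  have h2 : Continuous fun σ : ℝ => φ σ y :=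
    hφc.comp (continuous_id.prodMk continuous_const)
  exact h1.prodMk h2

private lemma const_W {X : Type*} [TopologicalSpace X]
    (φ : ℝ → X → X) (hφc : Continuous fun p : ℝ × X => φ p.1 p.2)
    (S : Set (X × X)) (W : X → X → ℤ)
    (hWc : ContinuousOn (fun q : X × X => W q.1 q.2) Sᶜ)
    (x y : X) {a b : ℝ} (hab : a ≤ b)
    (h : ∀ σ ∈ Set.Icc a b, (φ σ x, φ σ y) ∉ S) :
    W (φ b x) (φ b y) = W (φ a x) (φ a y) := by
  set f : ℝ → ℤ := fun σ => W (φ σ x) (φ σ y) with hf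
  have hfc : ContinuousOn f (Set.Icc a b) := by
    exact hWc.comp (flowPair_cont φ hφc x y).continuousOn (fun σ hσ => h σ hσ)
  have hconn : IsPreconnected (f '' Set.Icc a b) := isPreconnected_Icc.image f hfc
  exact hconn.subsingleton (mem_image_of_mem f (Set.right_mem_Icc.2 hab))
    (mem_image_of_mem f (Set.left_mem_Icc.2 hab))

private lemma crossings_finite {X : Type*} [TopologicalSpace X]
    (φ : ℝ → X → X) (hφc : Continuous fun p : ℝ × X => φ p.1 p.2)
    (hφadd : ∀ σ σ' x, φ (σ + σ') x = φ σ (φ σ' x))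
    (S : Set (X × X)) (hScl : IsClosed S)
    (hA4 : ∀ u v : X, (u, v) ∈ S → u ≠ v →
      ∃ ε > (0 : ℝ), ∀ σ : ℝ, σ ≠ 0 → |σ| < ε → (φ σ u, φ σ v) ∉ S)
    (x y : X) (hne : ∀ σ : ℝ, φ σ x ≠ φ σ y) (a b : ℝ) :
    {σ : ℝ | σ ∈ Set.Icc a b ∧ (φ σ x, φ σ y) ∈ S}.Finite := by
  set C : Set ℝ := {σ : ℝ | σ ∈ Set.Icc a b ∧ (φ σ x, φ σ y) ∈ S} with hC
  have hCcl : IsClosed C := by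
    have : C = Set.Icc a b ∩ (fun σ : ℝ => (φ σ x, φ σ y)) ⁻¹' S := rfl
    rw [this]
    exact isClosed_Icc.inter (hScl.preimage (flowPair_cont φ hφc x y))
  have hCcomp : IsCompact C :=
    IsCompact.of_isClosed_subset isCompact_Icc hCcl (fun σ hσ => hσ.1)
  have hdisc : DiscreteTopology C := by
    rw [discreteTopology_subtype_iff]
    intro c hc
    rw [inf_principal_eq_bot]
    obtain ⟨ε, hεpos, hε⟩ := hA4 (φ c x) (φ c y) hc.2 (hne c)
    refine mem_nhdsWithin.2 ⟨Metric.ball c ε, Metric.isOpen_ball, Metric.mem_ball_self hεpos, ?_⟩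
    rintro σ ⟨hσball, hσne⟩ hσC
    apply hε (σ - c) (sub_ne_zero.2 hσne) (by simpa [Real.dist_eq] using hσball)
    have e1 : φ (σ - c) (φ c x) = φ σ x := by rw [← hφadd, sub_add_cancel]
    have e2 : φ (σ - c) (φ c y) = φ σ y := by rw [← hφadd, sub_add_cancel]
    rw [e1, e2]
    exact hσC.2
  exact hCcomp.finite (isDiscrete_iff_discreteTopology.2 hdisc)

private lemma mono_W {X : Type*} [TopologicalSpace X]
    (φ : ℝ → X → X) (hφc : Continuous fun p : ℝ × X => φ p.1 p.2)
    (hφadd : ∀ σ σ' x, φ (σ + σ') x = φ σ (φ σ' x))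
    (S : Set (X × X)) (hScl : IsClosed S)
    (hΔS : ∀ x : X, (x, x) ∈ S)
    (W : X → X → ℤ)
    (hWc : ContinuousOn (fun q : X × X => W q.1 q.2) Sᶜ)
    (hA4 : ∀ u v : X, (u, v) ∈ S → u ≠ v →
      ∃ ε > (0 : ℝ), ∀ σ : ℝ, σ ≠ 0 → |σ| < ε → (φ σ u, φ σ v) ∉ S)
    (hA5 : ∀ u v : X, (u, v) ∈ S → u ≠ v →
      ∃ ε > (0 : ℝ), ∀ σ σ' : ℝ, -ε < σ → σ < 0 → 0 < σ' → σ' < ε →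
        W (φ σ' u) (φ σ' v) < W (φ σ u) (φ σ v))
    (x y : X) :
    ∀ n : ℕ, ∀ a b : ℝ, a ≤ b → (φ a x, φ a y) ∉ S → (φ b x, φ b y) ∉ S →
      ({σ : ℝ | σ ∈ Set.Icc a b ∧ (φ σ x, φ σ y) ∈ S}).ncard ≤ n →
      W (φ b x) (φ b y) ≤ W (φ a x) (φ a y) := by
  intro n
  induction n with
  | zero =>
    intro a b hab ha hb hcard
    have hne : ∀ σ : ℝ, φ σ x ≠ φ σ y := by
      intro σ h
      apply ha
      have key : φ a y = φ a x := by
        have e1 : φ a x = φ (a - σ) (φ σ x) := by rw [← hφadd, sub_add_cancel]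
        have e2 : φ a y = φ (a - σ) (φ σ y) := by rw [← hφadd, sub_add_cancel]
        rw [e1, e2, h]
      rw [key]; exact hΔS _
    have hfin := crossings_finite φ hφc hφadd S hScl hA4 x y hne a b
    have hempty : {σ : ℝ | σ ∈ Set.Icc a b ∧ (φ σ x, φ σ y) ∈ S} = ∅ :=
      (Set.ncard_eq_zero hfin).1 (Nat.le_zero.1 hcard)
    refine le_of_eq (const_W φ hφc S W hWc x y hab ?_)
    intro σ hσ hS
    have hmem : σ ∈ {σ : ℝ | σ ∈ Set.Icc a b ∧ (φ σ x, φ σ y) ∈ S} := ⟨hσ, hS⟩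
    rw [hempty] at hmem
    exact hmem
  | succ n ih =>
    intro a b hab ha hb hcard
    have hne : ∀ σ : ℝ, φ σ x ≠ φ σ y := by
      intro σ h
      apply ha
      have key : φ a y = φ a x := by
        have e1 : φ a x = φ (a - σ) (φ σ x) := by rw [← hφadd, sub_add_cancel]
        have e2 : φ a y = φ (a - σ) (φ σ y) := by rw [← hφadd, sub_add_cancel]
        rw [e1, e2, h]
      rw [key]; exact hΔS _
    set C : Set ℝ := {σ : ℝ | σ ∈ Set.Icc a b ∧ (φ σ x, φ σ y) ∈ S} with hCdef
    have hfin : C.Finite := crossings_finite φ hφc hφadd S hScl hA4 x y hne a b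
    rcases C.eq_empty_or_nonempty with hCe | hCne
    · refine le_of_eq (const_W φ hφc S W hWc x y hab ?_)
      intro σ hσ hS
      have hmem : σ ∈ C := ⟨hσ, hS⟩
      rw [hCe] at hmem
      exact hmem
    · obtain ⟨c, hcC, hcmax⟩ := Set.Finite.exists_maximalFor id C hfin hCne
      have hca : a ≤ c := hcC.1.1
      have hcb : c ≤ b := hcC.1.2
      have hcna : a < c := by
        rcases hca.lt_or_eq with h | h
        · exact h
        · exact absurd (h ▸ hcC.2) ha
      have hcnb : c < b := by
        rcases hcb.lt_or_eq with h | h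
        · exact h
        · exact absurd (h ▸ hcC.2) hb
      obtain ⟨ε₀, hε₀pos, hε₀⟩ := hA4 (φ c x) (φ c y) hcC.2 (hne c)
      obtain ⟨ε₁, hε₁pos, hε₁⟩ := hA5 (φ c x) (φ c y) hcC.2 (hne c)
      set m : ℝ := min (min ε₀ ε₁) (min (c - a) (b - c)) with hm
      have hmpos : 0 < m := by
        apply lt_min (lt_min hε₀pos hε₁pos) (lt_min (by linarith) (by linarith))
      set η : ℝ := m / 2 with hη
      have hηpos : 0 < η := by positivity
      have hηm : η < m := by simp only [hη]; linarith
      have hηε₀ : η < ε₀ := lt_of_lt_of_le hηm ((min_le_left _ _).trans (min_le_left _ _))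
      have hηε₁ : η < ε₁ := lt_of_lt_of_le hηm ((min_le_left _ _).trans (min_le_right _ _))
      have hηca : η < c - a := lt_of_lt_of_le hηm ((min_le_right _ _).trans (min_le_left _ _))
      have hηbc : η < b - c := lt_of_lt_of_le hηm ((min_le_right _ _).trans (min_le_right _ _))
      have em : ∀ z : X, φ (-η) (φ c z) = φ (c - η) z := by
        intro z; rw [← hφadd, neg_add_eq_sub]
      have ep : ∀ z : X, φ η (φ c z) = φ (c + η) z := by
        intro z; rw [← hφadd, add_comm]
      have hnotm : (φ (c - η) x, φ (c - η) y) ∉ S := by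
        have := hε₀ (-η) (neg_ne_zero.2 hηpos.ne') (by rw [abs_neg, abs_of_pos hηpos]; exact hηε₀)
        rwa [em, em] at this
      have hnotp : (φ (c + η) x, φ (c + η) y) ∉ S := by
        have := hε₀ η hηpos.ne' (by rw [abs_of_pos hηpos]; exact hηε₀)
        rwa [ep, ep] at this
      have hdrop : W (φ (c + η) x) (φ (c + η) y) < W (φ (c - η) x) (φ (c - η) y) := by
        have := hε₁ (-η) η (by linarith) (by linarith) hηpos hηε₁
        rwa [em, em, ep, ep] at this
      have hconst : W (φ b x) (φ b y) = W (φ (c + η) x) (φ (c + η) y) := by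
        refine const_W φ hφc S W hWc x y (by linarith) ?_
        intro σ hσ hSσ
        have hσC : σ ∈ C := ⟨⟨by linarith [hσ.1], hσ.2⟩, hSσ⟩
        have := hcmax hσC (by simp only [id]; linarith [hσ.1])
        simp only [id] at this
        linarith [hσ.1]
      have hrec : W (φ (c - η) x) (φ (c - η) y) ≤ W (φ a x) (φ a y) := by
        refine ih a (c - η) (by linarith) ha hnotm ?_
        have hsub : {σ : ℝ | σ ∈ Set.Icc a (c - η) ∧ (φ σ x, φ σ y) ∈ S} ⊆ C \ {c} := by
          rintro σ ⟨⟨h1, h2⟩, h3⟩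
          exact ⟨⟨⟨h1, by linarith⟩, h3⟩, by simp; intro h; linarith [h ▸ h2]⟩
        have h1 : {σ : ℝ | σ ∈ Set.Icc a (c - η) ∧ (φ σ x, φ σ y) ∈ S}.ncard
            ≤ (C \ {c}).ncard := Set.ncard_le_ncard hsub hfin.diff
        have h2 : (C \ {c}).ncard < C.ncard := Set.ncard_diff_singleton_lt_of_mem hcC hfin
        omega
      linarith

/-- under axioms (A1)–(A5), if w ∈ ω(u), then no two distinct
points of the closure of the orbit γ(w) form a singular pair (a pair in Σ). -/
theorem stmt_6 {X : Type*} [TopologicalSpace X] [CompactSpace X] [T2Space X]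
    (φ : ℝ → X → X)
    (hφc : Continuous fun p : ℝ × X => φ p.1 p.2)
    (hφ0 : ∀ x, φ 0 x = x)
    (hφadd : ∀ σ σ' x, φ (σ + σ') x = φ σ (φ σ' x))
    (S : Set (X × X)) (hScl : IsClosed S)
    (hΔS : ∀ x : X, (x, x) ∈ S)
    (W : X → X → ℤ)
    -- (A1)
    (hWc : ContinuousOn (fun q : X × X => W q.1 q.2) Sᶜ)
    (hWsym : ∀ u v : X, (u, v) ∉ S → W u v = W v u)
    -- (A2), (A3)
    (π : X → ℝ × ℝ) (hπc : Continuous π)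
    (hA3 : ∀ u v : X, π u = π v → (u, v) ∈ S)
    -- (A4)
    (hA4 : ∀ u v : X, (u, v) ∈ S → u ≠ v →
      ∃ ε > (0 : ℝ), ∀ σ : ℝ, σ ≠ 0 → |σ| < ε → (φ σ u, φ σ v) ∉ S)
    -- (A5)
    (hA5 : ∀ u v : X, (u, v) ∈ S → u ≠ v →
      ∃ ε > (0 : ℝ), ∀ σ σ' : ℝ, -ε < σ → σ < 0 → 0 < σ' → σ' < ε →
        W (φ σ' u) (φ σ' v) < W (φ σ u) (φ σ v))
    (u w : X)
    (hw : ∃ σs : ℕ → ℝ, Tendsto σs atTop atTop ∧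
      Tendsto (fun n => φ (σs n) u) atTop (nhds w)) :
    ∀ w₁ ∈ closure {x : X | ∃ σ : ℝ, x = φ σ w},
    ∀ w₂ ∈ closure {x : X | ∃ σ : ℝ, x = φ σ w},
      w₁ ≠ w₂ → (w₁, w₂) ∉ S := by
  intro w₁ hw₁ w₂ hw₂ hne12 hS12
  obtain ⟨σs, hσtop, hσw⟩ := hw
  obtain ⟨ε₀, hε₀pos, hε₀⟩ := hA4 w₁ w₂ hS12 hne12
  obtain ⟨ε₁, hε₁pos, hε₁⟩ := hA5 w₁ w₂ hS12 hne12
  set δ : ℝ := min ε₀ ε₁ / 2 with hδ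
  have hδpos : 0 < δ := by positivity
  have hδε₀ : δ < ε₀ := by
    have : min ε₀ ε₁ ≤ ε₀ := min_le_left _ _
    have : 0 < min ε₀ ε₁ := lt_min hε₀pos hε₁pos
    simp only [hδ]; linarith [min_le_left ε₀ ε₁]
  have hδε₁ : δ < ε₁ := by
    have : 0 < min ε₀ ε₁ := lt_min hε₀pos hε₁pos
    simp only [hδ]; linarith [min_le_right ε₀ ε₁]
  have hm : (φ (-δ) w₁, φ (-δ) w₂) ∉ S :=
    hε₀ (-δ) (neg_ne_zero.2 hδpos.ne') (by rw [abs_neg, abs_of_pos hδpos]; exact hδε₀)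
  have hp : (φ δ w₁, φ δ w₂) ∉ S :=
    hε₀ δ hδpos.ne' (by rw [abs_of_pos hδpos]; exact hδε₀)
  set cm : ℤ := W (φ (-δ) w₁) (φ (-δ) w₂) with hcm
  set cp : ℤ := W (φ δ w₁) (φ δ w₂) with hcp
  have hlt : cp < cm := hε₁ (-δ) δ (by linarith) (by linarith) hδpos hδε₁
  -- open sets where W is constant (= cm, cp) and pairs are off S
  set Um : Set (X × X) := Sᶜ ∩ (fun q : X × X => W q.1 q.2) ⁻¹' {cm} with hUm
  set Up : Set (X × X) := Sᶜ ∩ (fun q : X × X => W q.1 q.2) ⁻¹' {cp} with hUp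
  have hUmo : IsOpen Um := hWc.isOpen_inter_preimage hScl.isOpen_compl (isOpen_discrete _)
  have hUpo : IsOpen Up := hWc.isOpen_inter_preimage hScl.isOpen_compl (isOpen_discrete _)
  have hUmmem : (φ (-δ) w₁, φ (-δ) w₂) ∈ Um := ⟨hm, rfl⟩
  have hUpmem : (φ δ w₁, φ δ w₂) ∈ Up := ⟨hp, rfl⟩
  -- Step 1: approximate (w₁, w₂) by points on the orbit of w
  set O : Set X := {x : X | ∃ σ : ℝ, x = φ σ w} with hO
  set F : X × X → (X × X) × (X × X) :=
    fun p => ((φ (-δ) p.1, φ (-δ) p.2), (φ δ p.1, φ δ p.2)) with hF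
  have hFc : Continuous F := by
    have h1 : ∀ r : ℝ, Continuous fun p : X × X => φ r p.1 :=
      fun r => hφc.comp (continuous_const.prodMk continuous_fst)
    have h2 : ∀ r : ℝ, Continuous fun p : X × X => φ r p.2 :=
      fun r => hφc.comp (continuous_const.prodMk continuous_snd)
    exact ((h1 _).prodMk (h2 _)).prodMk ((h1 _).prodMk (h2 _))
  have hFnhds : F ⁻¹' (Um ×ˢ Up) ∈ nhds (w₁, w₂) := by
    apply hFc.continuousAt.preimage_mem_nhds
    exact prod_mem_nhds (hUmo.mem_nhds hUmmem) (hUpo.mem_nhds hUpmem)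
  have hclOO : (w₁, w₂) ∈ closure (O ×ˢ O) := by
    rw [closure_prod_eq]; exact ⟨hw₁, hw₂⟩
  obtain ⟨p, hpF, hpO⟩ := mem_closure_iff_nhds.1 hclOO _ hFnhds
  obtain ⟨s, hs⟩ := hpO.1
  obtain ⟨t, ht⟩ := hpO.2
  have e : ∀ (r σ : ℝ) (z : X), φ r (φ σ z) = φ (σ + r) z := by
    intro r σ z; rw [add_comm, hφadd]
  have hpF1 : (φ (s - δ) w, φ (t - δ) w) ∈ Um := by
    have := hpF.1
    simp only [hF] at this
    rw [hs, ht] at this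
    simpa [e, sub_eq_add_neg] using this
  have hpF2 : (φ (s + δ) w, φ (t + δ) w) ∈ Up := by
    have := hpF.2
    simp only [hF] at this
    rw [hs, ht] at this
    simpa [e] using this
  -- Step 2: approximate w by φ (σs n) u
  set G : X → (X × X) × (X × X) :=
    fun z => ((φ (s + δ) z, φ (t + δ) z), (φ (s - δ) z, φ (t - δ) z)) with hG
  have hGc : Continuous G := by
    have h1 : ∀ r : ℝ, Continuous fun z : X => φ r z :=
      fun r => hφc.comp (continuous_const.prodMk continuous_id)
    exact ((h1 _).prodMk (h1 _)).prodMk ((h1 _).prodMk (h1 _))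
  have hGw : G w ∈ Up ×ˢ Um := ⟨hpF2, hpF1⟩
  have hev : ∀ᶠ n in atTop, φ (σs n) u ∈ G ⁻¹' (Up ×ˢ Um) :=
    hσw.eventually_mem (((hUpo.prod hUmo).preimage hGc).mem_nhds hGw)
  -- pick n₀, then n₁ much later
  obtain ⟨n₀, hn₀⟩ := hev.exists
  obtain ⟨n₁, hn₁, hn₁big⟩ := (hev.and (hσtop.eventually_ge_atTop (σs n₀ + 2 * δ))).exists
  have hn₀p : (φ (s + δ + σs n₀) u, φ (t + δ + σs n₀) u) ∈ Up := by
    have := hn₀.1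
    simpa [hG, ← hφadd] using this
  have hn₁m : (φ (s - δ + σs n₁) u, φ (t - δ + σs n₁) u) ∈ Um := by
    have := hn₁.2
    simpa [hG, ← hφadd] using this
  -- apply monotonicity with x := u, y := φ (t - s) u
  set y : X := φ (t - s) u with hy
  have ey : ∀ r : ℝ, φ r y = φ (r + (t - s)) u := by
    intro r; rw [hφadd]
  have ha : (φ (s + δ + σs n₀) u, φ (s + δ + σs n₀) y) ∉ S := by
    rw [ey]
    have : s + δ + σs n₀ + (t - s) = t + δ + σs n₀ := by ring
    rw [this]
    exact hn₀p.1
  have hWa : W (φ (s + δ + σs n₀) u) (φ (s + δ + σs n₀) y) = cp := by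
    rw [ey]
    have : s + δ + σs n₀ + (t - s) = t + δ + σs n₀ := by ring
    rw [this]
    exact hn₀p.2
  have hb : (φ (s - δ + σs n₁) u, φ (s - δ + σs n₁) y) ∉ S := by
    rw [ey]
    have : s - δ + σs n₁ + (t - s) = t - δ + σs n₁ := by ring
    rw [this]
    exact hn₁m.1
  have hWb : W (φ (s - δ + σs n₁) u) (φ (s - δ + σs n₁) y) = cm := by
    rw [ey]
    have : s - δ + σs n₁ + (t - s) = t - δ + σs n₁ := by ring
    rw [this]
    exact hn₁m.2
  have hmono := mono_W φ hφc hφadd S hScl hΔS W hWc hA4 hA5 u y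
    ({σ : ℝ | σ ∈ Set.Icc (s + δ + σs n₀) (s - δ + σs n₁) ∧ (φ σ u, φ σ y) ∈ S}).ncard
    (s + δ + σs n₀) (s - δ + σs n₁) (by linarith) ha hb le_rfl
  rw [hWa, hWb] at hmono
  omega
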